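/- arXiv:1212.1420 — 4 statements merged into one kernel-verified Lean document; each statement's English description precedes it below -/
import Mathlib

section
/- If f'' : [a,b] → ℝ is absolutely continuous with f''' integrable on [a,b], then ∫_a^b f(x) dx - ((b-a)/6)(f(a) + 4f((a+b)/2) + f(b)) = (b-a)^4 ∫_0^1 p(t) f'''(ta + (1-t)b) dt, where p(t) = (1/6)t^2(t - 1/2) for t ∈ [0,1/2] and p(t) = (1/6)(t-1)^2(t - 1/2) for t ∈ (1/2,1]. -/
open MeasureTheory intervalIntegral

set_option maxHeartbeats 1000000 in
theorem lemma12 (a b : ℝ) (hab : a < b) (f f' f'' f''' : ℝ → ℝ)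
    (hf : ∀ x ∈ Set.Icc a b, HasDerivAt f (f' x) x)
    (hf' : ∀ x ∈ Set.Icc a b, HasDerivAt f' (f'' x) x)
    (hf'' : ∀ x ∈ Set.Icc a b, HasDerivAt f'' (f''' x) x)
    (hint : IntegrableOn f''' (Set.Icc a b)) :
    (∫ x in a..b, f x) - ((b - a) / 6) * (f a + 4 * f ((a + b) / 2) + f b)
    = (b - a) ^ 4 *
        ∫ t in (0:ℝ)..1,
          (if t ≤ 1 / 2 then (1 / 6) * t ^ 2 * (t - 1 / 2)
           else (1 / 6) * (t - 1) ^ 2 * (t - 1 / 2)) *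
          f''' (t * a + (1 - t) * b) := by
  have hab' : a - b ≠ 0 := by linarith
  set φ : ℝ → ℝ := fun t => t * a + (1 - t) * b with hφdef
  set F0 : ℝ → ℝ := fun t => f (φ t) with hF0def
  set F1 : ℝ → ℝ := fun t => (a - b) * f' (φ t) with hF1def
  set F2 : ℝ → ℝ := fun t => (a - b) ^ 2 * f'' (φ t) with hF2def
  set F3 : ℝ → ℝ := fun t => (a - b) ^ 3 * f''' (φ t) with hF3def
  have hφd : ∀ t : ℝ, HasDerivAt φ (a - b) t := by
    intro t
    have h := ((hasDerivAt_id t).mul_const a).add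
      (((hasDerivAt_const t (1:ℝ)).sub (hasDerivAt_id t)).mul_const b)
    exact h.congr_deriv (by ring)
  have hmem : ∀ t ∈ Set.uIcc (0:ℝ) 1, φ t ∈ Set.Icc a b := by
    intro t ht
    rw [Set.uIcc_of_le (by norm_num : (0:ℝ) ≤ 1)] at ht
    obtain ⟨h0, h1⟩ := ht
    constructor <;> simp only [hφdef] <;> nlinarith
  -- derivative chains
  have hD0 : ∀ t ∈ Set.uIcc (0:ℝ) 1, HasDerivAt F0 (F1 t) t := by
    intro t ht
    have h := (hf (φ t) (hmem t ht)).comp t (hφd t)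
    exact h.congr_deriv (by simp only [hF1def]; ring)
  have hD1 : ∀ t ∈ Set.uIcc (0:ℝ) 1, HasDerivAt F1 (F2 t) t := by
    intro t ht
    have h := ((hf' (φ t) (hmem t ht)).comp t (hφd t)).const_mul (a - b)
    exact h.congr_deriv (by simp only [hF2def]; ring)
  have hD2 : ∀ t ∈ Set.uIcc (0:ℝ) 1, HasDerivAt F2 (F3 t) t := by
    intro t ht
    have h := ((hf'' (φ t) (hmem t ht)).comp t (hφd t)).const_mul ((a - b) ^ 2)
    exact h.congr_deriv (by simp only [hF3def]; ring)
  -- continuity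
  have hφc : Continuous φ := by fun_prop
  have hcf : ContinuousOn f (Set.Icc a b) :=
    fun x hx => (hf x hx).continuousAt.continuousWithinAt
  have hcf' : ContinuousOn f' (Set.Icc a b) :=
    fun x hx => (hf' x hx).continuousAt.continuousWithinAt
  have hcf'' : ContinuousOn f'' (Set.Icc a b) :=
    fun x hx => (hf'' x hx).continuousAt.continuousWithinAt
  have hF0c : ContinuousOn F0 (Set.uIcc (0:ℝ) 1) :=
    hcf.comp hφc.continuousOn hmem
  have hF1c : ContinuousOn F1 (Set.uIcc (0:ℝ) 1) :=
    continuousOn_const.mul (hcf'.comp hφc.continuousOn hmem)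
  have hF2c : ContinuousOn F2 (Set.uIcc (0:ℝ) 1) :=
    continuousOn_const.mul (hcf''.comp hφc.continuousOn hmem)
  -- integrability of f'''∘φ on [0,1]
  have hI3 : IntervalIntegrable (fun t : ℝ => f''' (φ t)) volume 0 1 := by
    have hIab : IntervalIntegrable f''' volume a b :=
      (intervalIntegrable_iff_integrableOn_Ioc_of_le hab.le).mpr
        (hint.mono_set Set.Ioc_subset_Icc_self)
    have h2 := (hIab.comp_add_right b).comp_mul_left (c := a - b)
    rw [div_self hab', sub_self, zero_div] at h2
    have h3 := h2.symm
    have he : (fun t : ℝ => f''' (φ t)) = fun x => f''' ((a - b) * x + b) := by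
      funext t; simp only [hφdef]; congr 1; ring
    rw [he]; exact h3
  have hsub1 : Set.uIcc (0:ℝ) (1/2) ⊆ Set.uIcc (0:ℝ) 1 := by
    apply Set.uIcc_subset_uIcc <;> simp [Set.mem_uIcc] <;> norm_num
  have hsub2 : Set.uIcc (1/2:ℝ) 1 ⊆ Set.uIcc (0:ℝ) 1 := by
    apply Set.uIcc_subset_uIcc <;> simp [Set.mem_uIcc] <;> norm_num
  have hI3a : IntervalIntegrable (fun t : ℝ => f''' (φ t)) volume 0 (1/2) :=
    hI3.mono_set hsub1
  have hI3b : IntervalIntegrable (fun t : ℝ => f''' (φ t)) volume (1/2) 1 :=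
    hI3.mono_set hsub2
  have hF3a : IntervalIntegrable F3 volume 0 (1/2) := by
    have := hI3a.const_mul ((a - b) ^ 3); exact this
  have hF3b : IntervalIntegrable F3 volume (1/2) 1 := by
    have := hI3b.const_mul ((a - b) ^ 3); exact this
  have hF2a : IntervalIntegrable F2 volume 0 (1/2) :=
    ((hF2c.mono hsub1).intervalIntegrable)
  have hF2b : IntervalIntegrable F2 volume (1/2) 1 :=
    ((hF2c.mono hsub2).intervalIntegrable)
  have hF1a : IntervalIntegrable F1 volume 0 (1/2) :=
    ((hF1c.mono hsub1).intervalIntegrable)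
  have hF1b : IntervalIntegrable F1 volume (1/2) 1 :=
    ((hF1c.mono hsub2).intervalIntegrable)
  have hF0a : IntervalIntegrable F0 volume 0 (1/2) :=
    ((hF0c.mono hsub1).intervalIntegrable)
  have hF0b : IntervalIntegrable F0 volume (1/2) 1 :=
    ((hF0c.mono hsub2).intervalIntegrable)
  -- polynomial derivatives
  have hp1 : ∀ x : ℝ, HasDerivAt (fun t : ℝ => (1/6)*t^2*(t-1/2)) (x^2/2 - x/6) x := by
    intro x
    have h := (((hasDerivAt_pow 2 x).const_mul (1/6 : ℝ)).mul ((hasDerivAt_id x).sub_const (1/2)))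
    exact h.congr_deriv (by push_cast [id]; ring)
  have hp1' : ∀ x : ℝ, HasDerivAt (fun t : ℝ => t^2/2 - t/6) (x - 1/6) x := by
    intro x
    have h := (((hasDerivAt_pow 2 x).div_const 2).sub ((hasDerivAt_id x).div_const 6))
    exact h.congr_deriv (by push_cast [id]; ring)
  have hp1'' : ∀ x : ℝ, HasDerivAt (fun t : ℝ => t - 1/6) 1 x := by
    intro x; simpa using (hasDerivAt_id x).sub_const (1/6 : ℝ)
  have hp2 : ∀ x : ℝ, HasDerivAt (fun t : ℝ => (1/6)*(t-1)^2*(t-1/2))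
      (x^2/2 - (5/6)*x + 1/3) x := by
    intro x
    have h := ((((hasDerivAt_id x).sub_const 1).pow 2).const_mul (1/6 : ℝ)).mul
      ((hasDerivAt_id x).sub_const (1/2))
    exact h.congr_deriv (by push_cast [id, Pi.pow_apply]; ring)
  have hp2' : ∀ x : ℝ, HasDerivAt (fun t : ℝ => t^2/2 - (5/6)*t + 1/3) (x - 5/6) x := by
    intro x
    have h := ((((hasDerivAt_pow 2 x).div_const 2).sub
      ((hasDerivAt_id x).const_mul (5/6 : ℝ))).add_const (1/3 : ℝ))
    exact h.congr_deriv (by push_cast [id]; ring)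
  have hp2'' : ∀ x : ℝ, HasDerivAt (fun t : ℝ => t - 5/6) 1 x := by
    intro x; simpa using (hasDerivAt_id x).sub_const (5/6 : ℝ)
  have hpoly : ∀ (g : ℝ → ℝ), Continuous g → ∀ (c d : ℝ), IntervalIntegrable g volume c d :=
    fun g hg c d => hg.intervalIntegrable c d
  -- IBP on [0, 1/2]
  have ibp1 : ∫ t in (0:ℝ)..(1/2), ((1/6)*t^2*(t-1/2)) * F3 t
      = ((1/6)*(1/2:ℝ)^2*((1/2:ℝ)-1/2)) * F2 (1/2) - ((1/6)*(0:ℝ)^2*((0:ℝ)-1/2)) * F2 0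
        - ∫ t in (0:ℝ)..(1/2), (t^2/2 - t/6) * F2 t :=
    integral_mul_deriv_eq_deriv_mul (fun x _ => hp1 x) (fun x hx => hD2 x (hsub1 hx))
      (hpoly _ (by fun_prop) _ _) hF3a
  have ibp2 : ∫ t in (0:ℝ)..(1/2), (t^2/2 - t/6) * F2 t
      = ((1/2:ℝ)^2/2 - (1/2:ℝ)/6) * F1 (1/2) - ((0:ℝ)^2/2 - (0:ℝ)/6) * F1 0
        - ∫ t in (0:ℝ)..(1/2), (t - 1/6) * F1 t :=
    integral_mul_deriv_eq_deriv_mul (fun x _ => hp1' x) (fun x hx => hD1 x (hsub1 hx))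
      (hpoly _ (by fun_prop) _ _) hF2a
  have ibp3 : ∫ t in (0:ℝ)..(1/2), (t - 1/6) * F1 t
      = ((1/2:ℝ) - 1/6) * F0 (1/2) - ((0:ℝ) - 1/6) * F0 0
        - ∫ t in (0:ℝ)..(1/2), 1 * F0 t :=
    integral_mul_deriv_eq_deriv_mul (fun x _ => hp1'' x) (fun x hx => hD0 x (hsub1 hx))
      (hpoly _ (by fun_prop) _ _) hF1a
  -- IBP on [1/2, 1]
  have ibp4 : ∫ t in (1/2:ℝ)..1, ((1/6)*(t-1)^2*(t-1/2)) * F3 t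
      = ((1/6)*((1:ℝ)-1)^2*((1:ℝ)-1/2)) * F2 1 - ((1/6)*((1/2:ℝ)-1)^2*((1/2:ℝ)-1/2)) * F2 (1/2)
        - ∫ t in (1/2:ℝ)..1, (t^2/2 - (5/6)*t + 1/3) * F2 t :=
    integral_mul_deriv_eq_deriv_mul (fun x _ => hp2 x) (fun x hx => hD2 x (hsub2 hx))
      (hpoly _ (by fun_prop) _ _) hF3b
  have ibp5 : ∫ t in (1/2:ℝ)..1, (t^2/2 - (5/6)*t + 1/3) * F2 t
      = ((1:ℝ)^2/2 - (5/6)*1 + 1/3) * F1 1 - ((1/2:ℝ)^2/2 - (5/6)*(1/2) + 1/3) * F1 (1/2)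
        - ∫ t in (1/2:ℝ)..1, (t - 5/6) * F1 t :=
    integral_mul_deriv_eq_deriv_mul (fun x _ => hp2' x) (fun x hx => hD1 x (hsub2 hx))
      (hpoly _ (by fun_prop) _ _) hF2b
  have ibp6 : ∫ t in (1/2:ℝ)..1, (t - 5/6) * F1 t
      = ((1:ℝ) - 5/6) * F0 1 - ((1/2:ℝ) - 5/6) * F0 (1/2)
        - ∫ t in (1/2:ℝ)..1, 1 * F0 t :=
    integral_mul_deriv_eq_deriv_mul (fun x _ => hp2'' x) (fun x hx => hD0 x (hsub2 hx))
      (hpoly _ (by fun_prop) _ _) hF1b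
  have hone1 : ∫ t in (0:ℝ)..(1/2), 1 * F0 t = ∫ t in (0:ℝ)..(1/2), F0 t := by
    simp
  have hone2 : ∫ t in (1/2:ℝ)..1, 1 * F0 t = ∫ t in (1/2:ℝ)..1, F0 t := by
    simp
  -- combine IBP
  have key : (∫ t in (0:ℝ)..(1/2), ((1/6)*t^2*(t-1/2)) * F3 t)
      + (∫ t in (1/2:ℝ)..1, ((1/6)*(t-1)^2*(t-1/2)) * F3 t)
      = (1/6) * F0 0 + (2/3) * F0 (1/2) + (1/6) * F0 1
        - ((∫ t in (0:ℝ)..(1/2), F0 t) + ∫ t in (1/2:ℝ)..1, F0 t) := by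
    rw [ibp1, ibp2, ibp3, ibp4, ibp5, ibp6, hone1, hone2]; ring
  -- pull out constants
  have e1 : ∫ t in (0:ℝ)..(1/2), ((1/6)*t^2*(t-1/2)) * F3 t
      = (a - b)^3 * ∫ t in (0:ℝ)..(1/2), ((1/6)*t^2*(t-1/2)) * f''' (φ t) := by
    rw [← intervalIntegral.integral_const_mul]
    apply integral_congr
    intro t _; simp only [hF3def]; ring
  have e2 : ∫ t in (1/2:ℝ)..1, ((1/6)*(t-1)^2*(t-1/2)) * F3 t
      = (a - b)^3 * ∫ t in (1/2:ℝ)..1, ((1/6)*(t-1)^2*(t-1/2)) * f''' (φ t) := by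
    rw [← intervalIntegral.integral_const_mul]
    apply integral_congr
    intro t _; simp only [hF3def]; ring
  -- splitting the if-integral
  have hqc : Continuous (fun t : ℝ => if t ≤ 1/2 then (1/6)*t^2*(t-1/2)
      else (1/6)*(t-1)^2*(t-1/2)) := by
    apply Continuous.if_le (by fun_prop) (by fun_prop) continuous_id continuous_const
    intro x hx; simp only [id_eq] at hx; subst hx; norm_num
  have hifa : IntervalIntegrable (fun t : ℝ => (if t ≤ 1/2 then (1/6)*t^2*(t-1/2)
      else (1/6)*(t-1)^2*(t-1/2)) * f''' (φ t)) volume 0 (1/2) :=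
    hI3a.continuousOn_mul hqc.continuousOn
  have hifb : IntervalIntegrable (fun t : ℝ => (if t ≤ 1/2 then (1/6)*t^2*(t-1/2)
      else (1/6)*(t-1)^2*(t-1/2)) * f''' (φ t)) volume (1/2) 1 :=
    hI3b.continuousOn_mul hqc.continuousOn
  have hsplit : ∫ t in (0:ℝ)..1, (if t ≤ 1/2 then (1/6)*t^2*(t-1/2)
        else (1/6)*(t-1)^2*(t-1/2)) * f''' (φ t)
      = (∫ t in (0:ℝ)..(1/2), ((1/6)*t^2*(t-1/2)) * f''' (φ t))
        + ∫ t in (1/2:ℝ)..1, ((1/6)*(t-1)^2*(t-1/2)) * f''' (φ t) := by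
    rw [← integral_add_adjacent_intervals hifa hifb]
    congr 1
    · apply integral_congr
      intro t ht
      rw [Set.uIcc_of_le (by norm_num : (0:ℝ) ≤ 1/2)] at ht
      simp only [if_pos ht.2]
    · apply intervalIntegral.integral_congr_ae
      filter_upwards with t ht
      rw [Set.uIoc_of_le (by norm_num : (1/2:ℝ) ≤ 1)] at ht
      simp only [if_neg (not_le.mpr ht.1)]
  -- change of variables for the main integral
  have hsubst : ∫ x in a..b, f x = (b - a) * ∫ t in (0:ℝ)..1, F0 t := by
    have himg : ContinuousOn f (φ '' Set.uIcc (0:ℝ) 1) := by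
      apply hcf.mono
      rintro x ⟨t, ht, rfl⟩
      exact hmem t ht
    have h := integral_comp_smul_deriv' (f := φ) (f' := fun _ => a - b) (g := f)
      (fun x _ => hφd x) continuousOn_const himg
    have hφ0 : φ 0 = b := by simp [hφdef]
    have hφ1 : φ 1 = a := by simp [hφdef]
    rw [hφ0, hφ1] at h
    have hl : (∫ t in (0:ℝ)..1, (a - b) • (f ∘ φ) t) = (a - b) * ∫ t in (0:ℝ)..1, F0 t := by
      simp only [smul_eq_mul, Function.comp]
      rw [intervalIntegral.integral_const_mul]
    rw [hl] at h
    rw [integral_symm a b] at h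
    linarith [h]
  -- endpoint values
  have hφ0 : F0 0 = f b := by simp [hF0def, hφdef]
  have hφ1 : F0 1 = f a := by simp [hF0def, hφdef]
  have hφh : F0 (1/2) = f ((a + b) / 2) := by
    simp only [hF0def, hφdef]; congr 1; ring
  have hadd : (∫ t in (0:ℝ)..(1/2), F0 t) + ∫ t in (1/2:ℝ)..1, F0 t
      = ∫ t in (0:ℝ)..1, F0 t :=
    integral_add_adjacent_intervals hF0a hF0b
  rw [hsplit, hsubst]
  rw [e1, e2, hadd, hφ0, hφ1, hφh] at key
  linear_combination (b - a) * key
end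

section
/- Let q ≥ 1 and suppose |f'''|^q belongs to Q([a,b]). Then |∫_a^b f(x) dx - ((b-a)/6)(f(a) + 4f((a+b)/2) + f(b))| ≤ ((b-a)^4/6)(1/192)^{1-1/q} · [ (|f'''(a)|^q/48 + (17/48 - (1/2)ln 2)|f'''(b)|^q)^{1/q} + ((17/48 - (1/2)ln 2)|f'''(a)|^q + |f'''(b)|^q/48)^{1/q} ]. -/
open MeasureTheory intervalIntegral Real
open scoped ENNReal

lemma weighted_holder (μ : Measure ℝ) (w g φ : ℝ → ℝ) (q : ℝ) (hq : 1 ≤ q)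
    (hw0 : 0 ≤ᵐ[μ] w) (hg0 : 0 ≤ᵐ[μ] g)
    (hwint : Integrable w μ) (hgm : AEMeasurable g μ)
    (hφint : Integrable φ μ)
    (hbound : ∀ᵐ x ∂μ, w x * g x ^ q ≤ φ x)
    (hwg : Integrable (fun x => w x * g x) μ) :
    ∫ x, w x * g x ∂μ ≤ (∫ x, w x ∂μ) ^ (1 - 1/q) * (∫ x, φ x ∂μ) ^ (1/q) := by
  have hwg0 : 0 ≤ᵐ[μ] fun x => w x * g x := by
    filter_upwards [hw0, hg0] with x h1 h2 using mul_nonneg h1 h2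
  have hwgq0 : 0 ≤ᵐ[μ] fun x => w x * g x ^ q := by
    filter_upwards [hw0, hg0] with x h1 h2 using mul_nonneg h1 (Real.rpow_nonneg h2 q)
  have hφ0 : 0 ≤ᵐ[μ] φ := by
    filter_upwards [hwgq0, hbound] with x h1 h2 using le_trans h1 h2
  have hΦ0 : 0 ≤ ∫ x, φ x ∂μ := integral_nonneg_of_ae hφ0
  have hW0 : 0 ≤ ∫ x, w x ∂μ := integral_nonneg_of_ae hw0
  rcases eq_or_lt_of_le hq with hq1 | hq1
  · -- q = 1
    have : ∫ x, w x * g x ∂μ ≤ ∫ x, φ x ∂μ := by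
      refine integral_mono_ae hwg hφint ?_
      filter_upwards [hbound, hg0] with x h1 h2
      simpa [← hq1, Real.rpow_one] using h1
    simpa [← hq1] using this
  · -- q > 1
    set p : ℝ := q / (q - 1) with hp
    have hq0 : 0 < q := lt_trans one_pos hq1
    have hq1' : 0 < q - 1 := by linarith
    have hpq : p.HolderConjugate q := (Real.HolderConjugate.conjExponent hq1).symm
    have h1p : 1/p = 1 - 1/q := by
      rw [hp]; field_simp
    have hp0 : 0 < p := hpq.pos
    -- ENNReal versions
    set F : ℝ → ℝ≥0∞ := fun x => ENNReal.ofReal (w x) ^ (1/p) with hF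
    set G : ℝ → ℝ≥0∞ := fun x => ENNReal.ofReal (w x) ^ (1/q) * ENNReal.ofReal (g x) with hG
    have hwm : AEMeasurable w μ := hwint.aemeasurable
    have hFm : AEMeasurable F μ := hwm.ennreal_ofReal.pow_const _
    have hGm : AEMeasurable G μ := (hwm.ennreal_ofReal.pow_const _).mul hgm.ennreal_ofReal
    have key := ENNReal.lintegral_mul_le_Lp_mul_Lq μ hpq hFm hGm
    -- rewrite the three lintegrals
    have e1 : ∫⁻ x, (F * G) x ∂μ = ∫⁻ x, ENNReal.ofReal (w x * g x) ∂μ := by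
      refine lintegral_congr_ae ?_
      filter_upwards [hw0, hg0] with x h1 h2
      simp only [Pi.mul_apply, hF, hG]
      rw [← mul_assoc, ← ENNReal.rpow_add_of_nonneg _ _ (by positivity) (by positivity),
        ENNReal.ofReal_mul h1]
      rw [show 1/p + 1/q = 1 by simpa [one_div] using hpq.inv_add_inv_eq_one, ENNReal.rpow_one]
    have e2 : ∫⁻ x, F x ^ p ∂μ = ENNReal.ofReal (∫ x, w x ∂μ) := by
      rw [ofReal_integral_eq_lintegral_ofReal hwint hw0]
      refine lintegral_congr fun x => ?_
      rw [hF, ← ENNReal.rpow_mul, one_div, inv_mul_cancel₀ (ne_of_gt hp0), ENNReal.rpow_one]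
    have e3 : ∫⁻ x, G x ^ q ∂μ ≤ ENNReal.ofReal (∫ x, φ x ∂μ) := by
      rw [ofReal_integral_eq_lintegral_ofReal hφint hφ0]
      refine lintegral_mono_ae ?_
      filter_upwards [hw0, hg0, hbound] with x h1 h2 h3
      rw [hG, ENNReal.mul_rpow_of_nonneg _ _ (le_of_lt hq0), ← ENNReal.rpow_mul,
        one_div, inv_mul_cancel₀ (ne_of_gt hq0), ENNReal.rpow_one,
        ENNReal.ofReal_rpow_of_nonneg h2 (le_of_lt hq0), ← ENNReal.ofReal_mul h1]
      exact ENNReal.ofReal_le_ofReal h3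
    have key2 : ENNReal.ofReal (∫ x, w x * g x ∂μ) ≤
        ENNReal.ofReal (∫ x, w x ∂μ) ^ (1/p) * ENNReal.ofReal (∫ x, φ x ∂μ) ^ (1/q) := by
      rw [ofReal_integral_eq_lintegral_ofReal hwg hwg0]
      calc ∫⁻ x, ENNReal.ofReal (w x * g x) ∂μ = ∫⁻ x, (F * G) x ∂μ := e1.symm
        _ ≤ (∫⁻ x, F x ^ p ∂μ) ^ (1/p) * (∫⁻ x, G x ^ q ∂μ) ^ (1/q) := key
        _ ≤ _ := by
            rw [e2]
            exact mul_le_mul_right (ENNReal.rpow_le_rpow e3 (by positivity)) _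
    have hfin : ENNReal.ofReal (∫ x, w x ∂μ) ^ (1/p) * ENNReal.ofReal (∫ x, φ x ∂μ) ^ (1/q) ≠ ⊤ := by
      apply ENNReal.mul_ne_top <;>
        exact ENNReal.rpow_ne_top_of_nonneg (by positivity) ENNReal.ofReal_ne_top
    have := ENNReal.toReal_mono hfin key2
    rw [ENNReal.toReal_ofReal (integral_nonneg_of_ae hwg0), ENNReal.toReal_mul,
      ← ENNReal.toReal_rpow, ← ENNReal.toReal_rpow,
      ENNReal.toReal_ofReal hW0, ENNReal.toReal_ofReal hΦ0, h1p] at this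
    exact this

lemma ibp_left (a b : ℝ) (hab : a < b) (f f' f'' f''' : ℝ → ℝ)
    (hf : ∀ x ∈ Set.Icc a b, HasDerivAt f (f' x) x)
    (hf' : ∀ x ∈ Set.Icc a b, HasDerivAt f' (f'' x) x)
    (hf'' : ∀ x ∈ Set.Icc a b, HasDerivAt f'' (f''' x) x)
    (hint : IntegrableOn f''' (Set.Icc a b)) :
    ∫ x in a..(a+b)/2, (x-a)^2*((a+b)/2-x)/6 * f''' x
      = (∫ x in a..(a+b)/2, f x) + ((b-a)/2)^2/6 * f' ((a+b)/2)
        - (b-a)/3 * f ((a+b)/2) - (b-a)/6 * f a := by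
  have ham : a ≤ (a+b)/2 := by linarith
  have hsub : Set.uIcc a ((a+b)/2) ⊆ Set.Icc a b := by
    rw [Set.uIcc_of_le ham]
    exact Set.Icc_subset_Icc le_rfl (by linarith)
  have hfc : ContinuousOn f (Set.Icc a b) :=
    fun x hx => (hf x hx).continuousAt.continuousWithinAt
  have hf'c : ContinuousOn f' (Set.Icc a b) :=
    fun x hx => (hf' x hx).continuousAt.continuousWithinAt
  have hf''c : ContinuousOn f'' (Set.Icc a b) :=
    fun x hx => (hf'' x hx).continuousAt.continuousWithinAt
  have hfi : IntervalIntegrable f volume a ((a+b)/2) :=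
    (hfc.mono hsub).intervalIntegrable
  have hf'i : IntervalIntegrable f' volume a ((a+b)/2) :=
    (hf'c.mono hsub).intervalIntegrable
  have hf''i : IntervalIntegrable f'' volume a ((a+b)/2) :=
    (hf''c.mono hsub).intervalIntegrable
  have hf'''i : IntervalIntegrable f''' volume a ((a+b)/2) :=
    (hint.mono_set hsub).intervalIntegrable
  set m := (a+b)/2 with hm
  -- derivative chains
  have hd1 : ∀ x : ℝ, HasDerivAt (fun y => (y-a)^2*(m-y)/6)
      ((2*(x-a)*(m-x)-(x-a)^2)/6) x := by
    intro x
    have h := ((((hasDerivAt_id x).sub_const a).pow 2).mul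
      ((hasDerivAt_const x m).sub (hasDerivAt_id x))).div_const 6
    refine h.congr_deriv ?_
    simp only [id_eq, Pi.sub_apply, Pi.pow_apply, Pi.mul_apply, Pi.add_apply]
    push_cast
    ring
  have hd2 : ∀ x : ℝ, HasDerivAt (fun y => (2*(y-a)*(m-y)-(y-a)^2)/6)
      ((2*(m-x)-4*(x-a))/6) x := by
    intro x
    have h := (((((hasDerivAt_id x).sub_const a).const_mul 2).mul
      ((hasDerivAt_const x m).sub (hasDerivAt_id x))).sub
      (((hasDerivAt_id x).sub_const a).pow 2)).div_const 6
    refine h.congr_deriv ?_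
    simp only [id_eq, Pi.sub_apply, Pi.pow_apply, Pi.mul_apply, Pi.add_apply]
    push_cast
    ring
  have hd3 : ∀ x : ℝ, HasDerivAt (fun y => (2*(m-y)-4*(y-a))/6) (-1) x := by
    intro x
    have h := ((((hasDerivAt_const x m).sub (hasDerivAt_id x)).const_mul 2).sub
      (((hasDerivAt_id x).sub_const a).const_mul 4)).div_const 6
    refine h.congr_deriv ?_
    norm_num
  have hc1 : IntervalIntegrable (fun x : ℝ => (2*(x-a)*(m-x)-(x-a)^2)/6) volume a m :=
    Continuous.intervalIntegrable (by continuity) a m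
  have hc2 : IntervalIntegrable (fun x : ℝ => (2*(m-x)-4*(x-a))/6) volume a m :=
    Continuous.intervalIntegrable (by continuity) a m
  have hc3 : IntervalIntegrable (fun _ : ℝ => (-1 : ℝ)) volume a m :=
    intervalIntegrable_const
  have I1 := integral_mul_deriv_eq_deriv_mul
    (u := fun y => (y-a)^2*(m-y)/6) (u' := fun x => (2*(x-a)*(m-x)-(x-a)^2)/6)
    (v := f'') (v' := f''')
    (fun x _ => hd1 x) (fun x hx => hf'' x (hsub hx)) hc1 hf'''i
  have I2 := integral_mul_deriv_eq_deriv_mul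
    (u := fun y => (2*(y-a)*(m-y)-(y-a)^2)/6) (u' := fun x => (2*(m-x)-4*(x-a))/6)
    (v := f') (v' := f'')
    (fun x _ => hd2 x) (fun x hx => hf' x (hsub hx)) hc2 hf''i
  have I3 := integral_mul_deriv_eq_deriv_mul
    (u := fun y => (2*(m-y)-4*(y-a))/6) (u' := fun _ => (-1 : ℝ))
    (v := f) (v' := f')
    (fun x _ => hd3 x) (fun x hx => hf x (hsub hx)) hc3 hf'i
  have I4 : ∫ x in a..m, (-1 : ℝ) * f x = - ∫ x in a..m, f x := by
    rw [← intervalIntegral.integral_neg]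
    congr 1
    funext x
    ring
  rw [I4] at I3
  have hma : m - a = (b-a)/2 := by rw [hm]; ring
  have e1 : (m-a)^2*(m-m)/6 = 0 := by ring
  have e2 : (a-a)^2*(m-a)/6 = 0 := by ring
  -- combine
  linear_combination I1 - I2 + I3 + f'' m * e1 - f'' a * e2

lemma ibp_right (a b : ℝ) (hab : a < b) (f f' f'' f''' : ℝ → ℝ)
    (hf : ∀ x ∈ Set.Icc a b, HasDerivAt f (f' x) x)
    (hf' : ∀ x ∈ Set.Icc a b, HasDerivAt f' (f'' x) x)
    (hf'' : ∀ x ∈ Set.Icc a b, HasDerivAt f'' (f''' x) x)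
    (hint : IntegrableOn f''' (Set.Icc a b)) :
    ∫ x in ((a+b)/2)..b, (b-x)^2*((a+b)/2-x)/6 * f''' x
      = (∫ x in ((a+b)/2)..b, f x) - ((b-a)/2)^2/6 * f' ((a+b)/2)
        - (b-a)/6 * f b - (b-a)/3 * f ((a+b)/2) := by
  have hmb : (a+b)/2 ≤ b := by linarith
  have hsub : Set.uIcc ((a+b)/2) b ⊆ Set.Icc a b := by
    rw [Set.uIcc_of_le hmb]
    exact Set.Icc_subset_Icc (by linarith) le_rfl
  have hfc : ContinuousOn f (Set.Icc a b) :=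
    fun x hx => (hf x hx).continuousAt.continuousWithinAt
  have hf'c : ContinuousOn f' (Set.Icc a b) :=
    fun x hx => (hf' x hx).continuousAt.continuousWithinAt
  have hf''c : ContinuousOn f'' (Set.Icc a b) :=
    fun x hx => (hf'' x hx).continuousAt.continuousWithinAt
  have hfi : IntervalIntegrable f volume ((a+b)/2) b :=
    (hfc.mono hsub).intervalIntegrable
  have hf'i : IntervalIntegrable f' volume ((a+b)/2) b :=
    (hf'c.mono hsub).intervalIntegrable
  have hf''i : IntervalIntegrable f'' volume ((a+b)/2) b :=
    (hf''c.mono hsub).intervalIntegrable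
  have hf'''i : IntervalIntegrable f''' volume ((a+b)/2) b :=
    (hint.mono_set hsub).intervalIntegrable
  set m := (a+b)/2 with hm
  have hd1 : ∀ x : ℝ, HasDerivAt (fun y => (b-y)^2*(m-y)/6)
      ((-2*(b-x)*(m-x)-(b-x)^2)/6) x := by
    intro x
    have h := ((((hasDerivAt_const x b).sub (hasDerivAt_id x)).pow 2).mul
      ((hasDerivAt_const x m).sub (hasDerivAt_id x))).div_const 6
    refine h.congr_deriv ?_
    simp only [id_eq, Pi.sub_apply, Pi.pow_apply, Pi.mul_apply, Pi.add_apply]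
    push_cast
    ring
  have hd2 : ∀ x : ℝ, HasDerivAt (fun y => (-2*(b-y)*(m-y)-(b-y)^2)/6)
      ((2*(m-x)+4*(b-x))/6) x := by
    intro x
    have h := (((((hasDerivAt_const x b).sub (hasDerivAt_id x)).const_mul (-2)).mul
      ((hasDerivAt_const x m).sub (hasDerivAt_id x))).sub
      (((hasDerivAt_const x b).sub (hasDerivAt_id x)).pow 2)).div_const 6
    refine h.congr_deriv ?_
    simp only [id_eq, Pi.sub_apply, Pi.pow_apply, Pi.mul_apply, Pi.add_apply]
    push_cast
    ring
  have hd3 : ∀ x : ℝ, HasDerivAt (fun y => (2*(m-y)+4*(b-y))/6) (-1) x := by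
    intro x
    have h := ((((hasDerivAt_const x m).sub (hasDerivAt_id x)).const_mul 2).add
      (((hasDerivAt_const x b).sub (hasDerivAt_id x)).const_mul 4)).div_const 6
    refine h.congr_deriv ?_
    norm_num
  have hc1 : IntervalIntegrable (fun x : ℝ => (-2*(b-x)*(m-x)-(b-x)^2)/6) volume m b :=
    Continuous.intervalIntegrable (by continuity) m b
  have hc2 : IntervalIntegrable (fun x : ℝ => (2*(m-x)+4*(b-x))/6) volume m b :=
    Continuous.intervalIntegrable (by continuity) m b
  have hc3 : IntervalIntegrable (fun _ : ℝ => (-1 : ℝ)) volume m b :=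
    intervalIntegrable_const
  have I1 := integral_mul_deriv_eq_deriv_mul
    (u := fun y => (b-y)^2*(m-y)/6) (u' := fun x => (-2*(b-x)*(m-x)-(b-x)^2)/6)
    (v := f'') (v' := f''')
    (fun x _ => hd1 x) (fun x hx => hf'' x (hsub hx)) hc1 hf'''i
  have I2 := integral_mul_deriv_eq_deriv_mul
    (u := fun y => (-2*(b-y)*(m-y)-(b-y)^2)/6) (u' := fun x => (2*(m-x)+4*(b-x))/6)
    (v := f') (v' := f'')
    (fun x _ => hd2 x) (fun x hx => hf' x (hsub hx)) hc2 hf''i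
  have I3 := integral_mul_deriv_eq_deriv_mul
    (u := fun y => (2*(m-y)+4*(b-y))/6) (u' := fun _ => (-1 : ℝ))
    (v := f) (v' := f')
    (fun x _ => hd3 x) (fun x hx => hf x (hsub hx)) hc3 hf'i
  have I4 : ∫ x in m..b, (-1 : ℝ) * f x = - ∫ x in m..b, f x := by
    rw [← intervalIntegral.integral_neg]
    congr 1
    funext x
    ring
  rw [I4] at I3
  linear_combination I1 - I2 + I3

lemma half_est (a b : ℝ) (hab : a < b) (q : ℝ) (hq : 1 ≤ q) (F : ℝ → ℝ)
    (hFi : IntervalIntegrable F volume a ((a+b)/2))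
    (A B : ℝ) (hA : 0 ≤ A) (hB : 0 ≤ B)
    (hbound : ∀ x ∈ Set.Ioc a ((a+b)/2),
      |F x| ^ q ≤ A * (b-a)/(b-x) + B * (b-a)/(x-a)) :
    |∫ x in a..(a+b)/2, (x-a)^2*((a+b)/2-x)/6 * F x|
      ≤ (b-a)^4/6 * ((1:ℝ)/192) ^ (1-1/q) *
        ((17/48 - 1/2 * Real.log 2) * A + B/48) ^ (1/q) := by
  have ham : a ≤ (a+b)/2 := by linarith
  have hmb : (a+b)/2 < b := by linarith
  have hba : (0:ℝ) < b - a := by linarith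
  set m := (a+b)/2 with hm
  set μ := volume.restrict (Set.Ioc a m) with hμ
  set w : ℝ → ℝ := fun x => (x-a)^2*(m-x)/6 with hw
  set g : ℝ → ℝ := fun x => |F x| with hg
  set φ : ℝ → ℝ := fun x =>
    A*(b-a)*((x-a)^2*(m-x))/(6*(b-x)) + B*(b-a)*((x-a)*(m-x))/6 with hφ
  clear_value m
  have hFi' : IntegrableOn F (Set.Ioc a m) :=
    (intervalIntegrable_iff_integrableOn_Ioc_of_le ham).mp hFi
  have hwc : Continuous w := by fun_prop
  -- step 1 : |∫| ≤ ∫ w * g dμ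
  have step1 : |∫ x in a..m, (x-a)^2*(m-x)/6 * F x| ≤ ∫ x, w x * g x ∂μ := by
    refine le_trans (intervalIntegral.abs_integral_le_integral_abs ham) ?_
    rw [intervalIntegral.integral_of_le ham]
    refine le_of_eq (integral_congr_ae ?_)
    filter_upwards [ae_restrict_mem measurableSet_Ioc] with x hx
    have h1 : 0 ≤ w x := by
      have h2 : 0 ≤ x - a := by linarith [hx.1]
      have h3 : 0 ≤ m - x := by linarith [hx.2]
      simp only [hw]
      positivity
    rw [abs_mul, abs_of_nonneg h1]
  -- hypotheses of weighted_holder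
  have hw0 : 0 ≤ᵐ[μ] w := by
    filter_upwards [ae_restrict_mem measurableSet_Ioc] with x hx
    have h1 : 0 ≤ x - a := by linarith [hx.1]
    have h2 : 0 ≤ m - x := by linarith [hx.2]
    simp only [hw, Pi.zero_apply]
    positivity
  have hg0 : 0 ≤ᵐ[μ] g := Filter.Eventually.of_forall fun x => abs_nonneg _
  have hwint : Integrable w μ := hwc.integrableOn_Ioc
  have hgm : AEMeasurable g μ := (hFi'.aestronglyMeasurable.norm).aemeasurable
  have hφc : ContinuousOn φ (Set.Icc a m) := by
    apply ContinuousOn.add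
    · apply ContinuousOn.div
      · fun_prop
      · fun_prop
      · intro x hx
        have : x ≤ m := hx.2
        have : b - x > 0 := by linarith
        positivity
    · fun_prop
  have hφint : Integrable φ μ :=
    (hφc.integrableOn_Icc).mono_set Set.Ioc_subset_Icc_self
  have hbound' : ∀ᵐ x ∂μ, w x * g x ^ q ≤ φ x := by
    filter_upwards [ae_restrict_mem measurableSet_Ioc] with x hx
    have hxa : 0 < x - a := by linarith [hx.1]
    have hxm : x ≤ m := hx.2
    have hbx : 0 < b - x := by linarith
    have h1 : 0 ≤ w x := by
      have h2 : 0 ≤ x - a := le_of_lt hxa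
      have h3 : 0 ≤ m - x := by linarith
      simp only [hw]; positivity
    calc w x * g x ^ q ≤ w x * (A * (b-a)/(b-x) + B * (b-a)/(x-a)) :=
          mul_le_mul_of_nonneg_left (hbound x hx) h1
      _ = φ x := by simp only [hw, hφ]; field_simp
  have hwg : Integrable (fun x => w x * g x) μ := by
    refine Integrable.mono' (g := fun x => (b-a)^3 * |F x|)
      ((hFi'.abs).const_mul _) (hwc.aestronglyMeasurable.mul hgm.aestronglyMeasurable) ?_
    filter_upwards [ae_restrict_mem measurableSet_Ioc] with x hx
    have hxa : 0 ≤ x - a := by linarith [hx.1]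
    have hxm : 0 ≤ m - x := by linarith [hx.2]
    have hxb : x - a ≤ b - a := by linarith [hx.2, hmb]
    have hmx : m - x ≤ b - a := by linarith [hx.1, hmb]
    have h1 : 0 ≤ w x := by simp only [hw]; positivity
    rw [Real.norm_eq_abs, abs_mul, abs_of_nonneg h1, abs_abs]
    have e1 : (x-a)^2 ≤ (b-a)^2 := by nlinarith
    have e2 : (x-a)^2*(m-x) ≤ (b-a)^2*(b-a) :=
      mul_le_mul e1 hmx hxm (by positivity)
    have : w x ≤ (b-a)^3 := by
      simp only [hw]; nlinarith [pow_nonneg (le_of_lt hba) 3]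
    exact mul_le_mul_of_nonneg_right this (abs_nonneg _)
  have key := weighted_holder μ w g φ q hq hw0 hg0 hwint hgm hφint hbound' hwg
  -- compute ∫ w
  have hWval : ∫ x, w x ∂μ = (b-a)^4/1152 := by
    rw [hμ, ← intervalIntegral.integral_of_le ham]
    have : ∀ x ∈ Set.uIcc a m, HasDerivAt
        (fun y => (y-a)^3*(m-a)/18 - (y-a)^4/24) (w x) x := by
      intro x _
      have h := ((((hasDerivAt_id x).sub_const a).pow 3).mul_const ((m-a)/18)).sub
        ((((hasDerivAt_id x).sub_const a).pow 4).div_const 24)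
      convert h using 1
      · rfl
      · rfl
      · funext y; simp only [id_eq, Pi.sub_apply, Pi.pow_apply, Pi.mul_apply, Pi.add_apply]; ring
      · simp only [hw, id_eq]; push_cast; ring
    rw [intervalIntegral.integral_eq_sub_of_hasDerivAt this
      (hwc.intervalIntegrable a m)]
    rw [hm]; ring
  -- compute ∫ φ
  have hΦval : ∫ x, φ x ∂μ = (b-a)^4/6 * ((17/48 - 1/2 * Real.log 2) * A + B/48) := by
    rw [hμ, ← intervalIntegral.integral_of_le ham]
    set Φ : ℝ → ℝ := fun x =>
      A*(b-a)/6 * (-(b-x)^3/3 + (5*(b-a)/4)*(b-x)^2 - 2*(b-a)^2*(b-x)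
        + ((b-a)^3/2) * Real.log (b-x))
      + B*(b-a)/6 * ((x-a)^2*((b-a)/2)/2 - (x-a)^3/3) with hΦ
    have hder : ∀ x ∈ Set.uIcc a m, HasDerivAt Φ (φ x) x := by
      intro x hx
      rw [Set.uIcc_of_le ham] at hx
      have hbx : 0 < b - x := by linarith [hx.2]
      have hlog : HasDerivAt (fun y => Real.log (b - y)) (-(b-x)⁻¹) x := by
        have h1 : HasDerivAt (fun y : ℝ => b - y) (-1) x := by
          simpa using (hasDerivAt_id x).const_sub b
        have := (Real.hasDerivAt_log (ne_of_gt hbx)).comp x h1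
        refine this.congr_deriv ?_
        ring
      have hbxd : HasDerivAt (fun y : ℝ => b - y) (-1) x := by
        simpa using (hasDerivAt_id x).const_sub b
      have hA1 : HasDerivAt (fun y => -(b-y)^3/3 + (5*(b-a)/4)*(b-y)^2 - 2*(b-a)^2*(b-y)
          + ((b-a)^3/2) * Real.log (b-y))
          (-(3*(b-x)^2*(-1))/3 + (5*(b-a)/4)*(2*(b-x)*(-1)) - 2*(b-a)^2*(-1)
            + ((b-a)^3/2) * (-(b-x)⁻¹)) x := by
        exact ((((hbxd.pow 3).neg.div_const 3).add
          (((hbxd.pow 2).const_mul _))).sub (hbxd.const_mul _)).add (hlog.const_mul _)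
          |>.congr_deriv (by push_cast; ring)
      have hB1 : HasDerivAt (fun y => (y-a)^2*((b-a)/2)/2 - (y-a)^3/3)
          (2*(x-a)*((b-a)/2)/2 - 3*(x-a)^2/3) x := by
        exact (((((hasDerivAt_id x).sub_const a).pow 2).mul_const _).div_const 2).sub
          ((((hasDerivAt_id x).sub_const a).pow 3).div_const 3)
          |>.congr_deriv (by push_cast; simp only [id_eq]; ring)
      have := ((hA1.const_mul (A*(b-a)/6)).add (hB1.const_mul (B*(b-a)/6)))
      have hbx' : b - x ≠ 0 := ne_of_gt hbx
      rw [hΦ]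
      refine this.congr_deriv ?_
      simp only [hφ]
      rw [hm]
      field_simp
      ring
    have hφi : IntervalIntegrable φ volume a m :=
      (hφc.mono (by rw [Set.uIcc_of_le ham])).intervalIntegrable
    rw [intervalIntegral.integral_eq_sub_of_hasDerivAt hder hφi]
    simp only [hΦ]
    have hbm : b - m = (b-a)/2 := by rw [hm]; ring
    rw [hbm, Real.log_div (ne_of_gt hba) (by norm_num : (2:ℝ) ≠ 0), hm]
    ring
  rw [hWval, hΦval] at key
  -- final algebra
  have hq0 : 0 < q := lt_of_lt_of_le one_pos hq
  have h1q : 0 ≤ 1 - 1/q := by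
    have : 1/q ≤ 1 := by rw [div_le_one hq0]; exact hq
    linarith
  have h1q' : 0 ≤ 1/q := by positivity
  have hS : 0 ≤ (17/48 - 1/2 * Real.log 2) * A + B/48 := by
    have hlog2 : Real.log 2 < 0.6931471808 := Real.log_two_lt_d9
    have : (0:ℝ) ≤ 17/48 - 1/2 * Real.log 2 := by nlinarith
    positivity
  have halg : ((b-a)^4/1152) ^ (1-1/q) * ((b-a)^4/6 * ((17/48 - 1/2 * Real.log 2) * A + B/48)) ^ (1/q)
      = (b-a)^4/6 * ((1:ℝ)/192) ^ (1-1/q) * ((17/48 - 1/2 * Real.log 2) * A + B/48) ^ (1/q) := by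
    have h46 : (0:ℝ) < (b-a)^4/6 := by positivity
    rw [show (b-a)^4/1152 = ((b-a)^4/6) * (1/192) by ring]
    rw [Real.mul_rpow (le_of_lt h46) (by norm_num), Real.mul_rpow (le_of_lt h46) hS]
    rw [show ((b-a)^4/6) ^ (1-1/q) * (1/192) ^ (1-1/q) * (((b-a)^4/6) ^ (1/q) * (((17:ℝ)/48 - 1/2 * Real.log 2) * A + B/48) ^ (1/q))
      = (((b-a)^4/6) ^ (1-1/q) * ((b-a)^4/6) ^ (1/q)) * ((1/192) ^ (1-1/q) * (((17:ℝ)/48 - 1/2 * Real.log 2) * A + B/48) ^ (1/q)) by ring]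
    rw [← Real.rpow_add h46, show 1 - 1/q + 1/q = 1 by ring, Real.rpow_one]
    ring
  rw [halg] at key
  exact le_trans step1 key

theorem thm24 (a b : ℝ) (hab : a < b) (q : ℝ) (hq : 1 ≤ q)
    (f f' f'' f''' : ℝ → ℝ)
    (hf : ∀ x ∈ Set.Icc a b, HasDerivAt f (f' x) x)
    (hf' : ∀ x ∈ Set.Icc a b, HasDerivAt f' (f'' x) x)
    (hf'' : ∀ x ∈ Set.Icc a b, HasDerivAt f'' (f''' x) x)
    (hint : IntegrableOn f''' (Set.Icc a b))
    (hQ : ∀ x ∈ Set.Icc a b, ∀ y ∈ Set.Icc a b, ∀ l ∈ Set.Ioo (0:ℝ) 1,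
      |f''' (l * x + (1 - l) * y)| ^ q ≤ |f''' x| ^ q / l + |f''' y| ^ q / (1 - l)) :
    |(∫ x in a..b, f x) - ((b - a) / 6) * (f a + 4 * f ((a + b) / 2) + f b)|
    ≤ ((b - a) ^ 4 / 6) * (1 / 192) ^ (1 - 1 / q) *
        ((|f''' a| ^ q / 48 + (17 / 48 - (1 / 2) * Real.log 2) * |f''' b| ^ q) ^ (1 / q)
          + ((17 / 48 - (1 / 2) * Real.log 2) * |f''' a| ^ q + |f''' b| ^ q / 48) ^ (1 / q)) := by
  have hba : (0:ℝ) < b - a := by linarith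
  have ham : a ≤ (a+b)/2 := by linarith
  have hmb : (a+b)/2 ≤ b := by linarith
  have hfc : ContinuousOn f (Set.Icc a b) :=
    fun x hx => (hf x hx).continuousAt.continuousWithinAt
  have hfiL : IntervalIntegrable f volume a ((a+b)/2) :=
    (hfc.mono (by rw [Set.uIcc_of_le ham]; exact Set.Icc_subset_Icc le_rfl hmb)).intervalIntegrable
  have hfiR : IntervalIntegrable f volume ((a+b)/2) b :=
    (hfc.mono (by rw [Set.uIcc_of_le hmb]; exact Set.Icc_subset_Icc ham le_rfl)).intervalIntegrable
  have hadd := intervalIntegral.integral_add_adjacent_intervals hfiL hfiR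
  have hL := ibp_left a b hab f f' f'' f''' hf hf' hf'' hint
  have hR := ibp_right a b hab f f' f'' f''' hf hf' hf'' hint
  set L := ∫ x in a..(a+b)/2, (x-a)^2*((a+b)/2-x)/6 * f''' x with hLdef
  set R := ∫ x in ((a+b)/2)..b, (b-x)^2*((a+b)/2-x)/6 * f''' x with hRdef
  have hEq : (∫ x in a..b, f x) - ((b - a) / 6) * (f a + 4 * f ((a + b) / 2) + f b)
      = L + R := by
    linear_combination -hL - hR - hadd
  have haI : a ∈ Set.Icc a b := ⟨le_rfl, le_of_lt hab⟩
  have hbI : b ∈ Set.Icc a b := ⟨le_of_lt hab, le_rfl⟩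
  have hf3iL : IntervalIntegrable f''' volume a ((a+b)/2) :=
    (hint.mono_set (by rw [Set.uIcc_of_le ham]; exact Set.Icc_subset_Icc le_rfl hmb)).intervalIntegrable
  have hboundL : ∀ x ∈ Set.Ioc a ((a+b)/2),
      |f''' x| ^ q ≤ |f''' a| ^ q * (b-a)/(b-x) + |f''' b| ^ q * (b-a)/(x-a) := by
    intro x hx
    have hxa : a < x := hx.1
    have hxm : x ≤ (a+b)/2 := hx.2
    have hl : (b-x)/(b-a) ∈ Set.Ioo (0:ℝ) 1 := by
      constructor
      · apply div_pos (by linarith) hba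
      · rw [div_lt_one hba]; linarith
    have hpt : (b-x)/(b-a) * a + (1 - (b-x)/(b-a)) * b = x := by
      field_simp
      ring
    have h := hQ a haI b hbI _ hl
    rw [hpt] at h
    have e1 : |f''' a| ^ q / ((b-x)/(b-a)) = |f''' a| ^ q * (b-a)/(b-x) := by
      rw [div_div_eq_mul_div]
    have e2 : |f''' b| ^ q / (1 - (b-x)/(b-a)) = |f''' b| ^ q * (b-a)/(x-a) := by
      rw [show 1 - (b-x)/(b-a) = (x-a)/(b-a) by rw [eq_div_iff hba.ne', sub_mul, div_mul_cancel₀ _ hba.ne']; ring, div_div_eq_mul_div]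
    rw [e1, e2] at h
    exact h
  have estL := half_est a b hab q hq f''' hf3iL (|f''' a| ^ q) (|f''' b| ^ q)
    (Real.rpow_nonneg (abs_nonneg _) q) (Real.rpow_nonneg (abs_nonneg _) q) hboundL
  have hf3iR : IntervalIntegrable f''' volume ((a+b)/2) b :=
    (hint.mono_set (by rw [Set.uIcc_of_le hmb]; exact Set.Icc_subset_Icc ham le_rfl)).intervalIntegrable
  have hGi : IntervalIntegrable (fun x => f''' (a+b-x)) volume a ((a+b)/2) := by
    have h := hf3iR.comp_sub_left (a+b)
    rw [show a+b-b = a by ring, show a+b-((a+b)/2) = (a+b)/2 by ring] at h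
    exact h.symm
  have hrefl : (∫ x in a..(a+b)/2, (x-a)^2*((a+b)/2-x)/6 * f''' (a+b-x)) = -R := by
    have h1 := intervalIntegral.integral_comp_sub_left
      (a := a) (b := (a+b)/2) (fun x => (b-x)^2*((a+b)/2-x)/6 * f''' x) (a+b)
    rw [show a+b-((a+b)/2) = (a+b)/2 by ring, show a+b-a = b by ring] at h1
    rw [hRdef, ← h1]
    rw [← intervalIntegral.integral_neg]
    apply intervalIntegral.integral_congr
    intro x _
    dsimp only
    ring_nf
  have hboundR : ∀ x ∈ Set.Ioc a ((a+b)/2),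
      |(fun x => f''' (a+b-x)) x| ^ q ≤ |f''' b| ^ q * (b-a)/(b-x) + |f''' a| ^ q * (b-a)/(x-a) := by
    intro x hx
    have hxa : a < x := hx.1
    have hxm : x ≤ (a+b)/2 := hx.2
    have hl : (x-a)/(b-a) ∈ Set.Ioo (0:ℝ) 1 := by
      constructor
      · apply div_pos (by linarith) hba
      · rw [div_lt_one hba]; linarith
    have hpt : (x-a)/(b-a) * a + (1 - (x-a)/(b-a)) * b = a+b-x := by
      field_simp
      ring
    have h := hQ a haI b hbI _ hl
    rw [hpt] at h
    have e1 : |f''' a| ^ q / ((x-a)/(b-a)) = |f''' a| ^ q * (b-a)/(x-a) := by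
      rw [div_div_eq_mul_div]
    have e2 : |f''' b| ^ q / (1 - (x-a)/(b-a)) = |f''' b| ^ q * (b-a)/(b-x) := by
      rw [show 1 - (x-a)/(b-a) = (b-x)/(b-a) by rw [eq_div_iff hba.ne', sub_mul, div_mul_cancel₀ _ hba.ne']; ring, div_div_eq_mul_div]
    rw [e1, e2] at h
    dsimp only
    linarith
  have estR' := half_est a b hab q hq (fun x => f''' (a+b-x)) hGi (|f''' b| ^ q) (|f''' a| ^ q)
    (Real.rpow_nonneg (abs_nonneg _) q) (Real.rpow_nonneg (abs_nonneg _) q) hboundR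
  have estR : |R| ≤ (b-a)^4/6 * ((1:ℝ)/192) ^ (1-1/q) *
      ((17/48 - 1/2 * Real.log 2) * |f''' b| ^ q + |f''' a| ^ q/48) ^ (1/q) := by
    rw [show |R| = |∫ x in a..(a+b)/2, (x-a)^2*((a+b)/2-x)/6 * f''' (a+b-x)| by
      rw [hrefl, abs_neg]]
    exact estR'
  rw [hEq]
  calc |L + R| ≤ |L| + |R| := abs_add_le _ _
    _ ≤ (b-a)^4/6 * ((1:ℝ)/192) ^ (1-1/q) *
          ((17/48 - 1/2 * Real.log 2) * |f''' a| ^ q + |f''' b| ^ q/48) ^ (1/q)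
        + (b-a)^4/6 * ((1:ℝ)/192) ^ (1-1/q) *
          ((17/48 - 1/2 * Real.log 2) * |f''' b| ^ q + |f''' a| ^ q/48) ^ (1/q) :=
      add_le_add estL estR
    _ = _ := by
      rw [show |f''' a| ^ q / 48 + (17 / 48 - (1 / 2) * Real.log 2) * |f''' b| ^ q
        = (17/48 - 1/2 * Real.log 2) * |f''' b| ^ q + |f''' a| ^ q/48 by ring]
      rw [show (17 / 48 - (1 / 2) * Real.log 2) * |f''' a| ^ q + |f''' b| ^ q / 48
        = (17/48 - 1/2 * Real.log 2) * |f''' a| ^ q + |f''' b| ^ q/48 by ring]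
      ring
end

section
/- Let |f'''| belong to Q([a,b]). Then |∫_a^b f(x) dx - ((b-a)/6)(f(a) + 4f((a+b)/2) + f(b))| ≤ ((b-a)^4/6)(3/8 - (1/2)ln 2)(|f'''(a)| + |f'''(b)|). -/
open MeasureTheory intervalIntegral Set

private lemma cor12_vderiv (p c : ℝ) (f f' f'' f''' : ℝ → ℝ) (s : ℝ)
    (h1 : HasDerivAt f (f' s) s) (h2 : HasDerivAt f' (f'' s) s)
    (h3 : HasDerivAt f'' (f''' s) s) :
    HasDerivAt (fun t => (-(1/6) * (t-p)^2 * (t-c)) * f'' t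
      - (-(1/6) * (2*(t-p)*(t-c) + (t-p)^2)) * f' t
      + (-(1/6) * (2*(t-c) + 4*(t-p))) * f t)
      ((-(1/6) * (s-p)^2 * (s-c)) * f''' s - f s) s := by
  have e1 : HasDerivAt (fun t : ℝ => t - p) 1 s := (hasDerivAt_id s).sub_const p
  have e2 : HasDerivAt (fun t : ℝ => t - c) 1 s := (hasDerivAt_id s).sub_const c
  have hP : HasDerivAt (fun t : ℝ => -(1/6) * (t-p)^2 * (t-c))
      (-(1/6) * (2*(s-p)*(s-c) + (s-p)^2)) s := by
    have h := ((e1.pow 2).mul e2).const_mul (-(1/6) : ℝ)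
    have hfe : (fun t : ℝ => -(1/6 : ℝ) * ((t-p)^2 * (t-c)))
        = fun t : ℝ => -(1/6) * (t-p)^2 * (t-c) := by funext t; ring
    have h' : HasDerivAt (fun t : ℝ => -(1/6 : ℝ) * ((t-p)^2 * (t-c))) _ s := h
    rw [hfe] at h'
    convert h' using 1
    push_cast [Pi.pow_apply]
    ring
  have hQ : HasDerivAt (fun t : ℝ => -(1/6) * (2*(t-p)*(t-c) + (t-p)^2))
      (-(1/6) * (2*(s-c) + 4*(s-p))) s := by
    have h := (((e1.const_mul (2:ℝ)).mul e2).add (e1.pow 2)).const_mul (-(1/6) : ℝ)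
    have h' : HasDerivAt (fun t : ℝ => -(1/6) * (2*(t-p)*(t-c) + (t-p)^2)) _ s := h
    convert h' using 1
    push_cast
    ring
  have hR : HasDerivAt (fun t : ℝ => -(1/6) * (2*(t-c) + 4*(t-p))) (-1 : ℝ) s := by
    have h := ((e2.const_mul (2:ℝ)).add (e1.const_mul (4:ℝ))).const_mul (-(1/6) : ℝ)
    have h' : HasDerivAt (fun t : ℝ => -(1/6) * (2*(t-c) + 4*(t-p))) _ s := h
    convert h' using 1
    norm_num
  have H := ((hP.mul h3).sub (hQ.mul h2)).add (hR.mul h1)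
  have H' : HasDerivAt (fun t => (-(1/6) * (t-p)^2 * (t-c)) * f'' t
      - (-(1/6) * (2*(t-p)*(t-c) + (t-p)^2)) * f' t
      + (-(1/6) * (2*(t-c) + 4*(t-p))) * f t) _ s := H
  convert H' using 1
  ring

set_option maxHeartbeats 2000000 in
theorem cor12 (a b : ℝ) (hab : a < b)
    (f f' f'' f''' : ℝ → ℝ)
    (hf : ∀ x ∈ Set.Icc a b, HasDerivAt f (f' x) x)
    (hf' : ∀ x ∈ Set.Icc a b, HasDerivAt f' (f'' x) x)
    (hf'' : ∀ x ∈ Set.Icc a b, HasDerivAt f'' (f''' x) x)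
    (hint : IntegrableOn f''' (Set.Icc a b))
    (hQ : ∀ x ∈ Set.Icc a b, ∀ y ∈ Set.Icc a b, ∀ l ∈ Set.Ioo (0:ℝ) 1,
      |f''' (l * x + (1 - l) * y)| ≤ |f''' x| / l + |f''' y| / (1 - l)) :
    |(∫ x in a..b, f x) - ((b - a) / 6) * (f a + 4 * f ((a + b) / 2) + f b)|
    ≤ ((b - a) ^ 4 / 6) * (3 / 8 - (1 / 2) * Real.log 2) * (|f''' a| + |f''' b|) := by
  have hba : (0:ℝ) < b - a := sub_pos.2 hab
  set m : ℝ := (a + b) / 2 with hm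
  have ham : a < m := by rw [hm]; linarith
  have hmb : m < b := by rw [hm]; linarith
  -- continuity and integrability
  have hfc : ContinuousOn f (Icc a b) := fun x hx => (hf x hx).continuousAt.continuousWithinAt
  have hfint1 : IntervalIntegrable f volume a m := by
    apply ContinuousOn.intervalIntegrable
    rw [uIcc_of_le ham.le]
    exact hfc.mono (Icc_subset_Icc le_rfl hmb.le)
  have hfint2 : IntervalIntegrable f volume m b := by
    apply ContinuousOn.intervalIntegrable
    rw [uIcc_of_le hmb.le]
    exact hfc.mono (Icc_subset_Icc ham.le le_rfl)
  have h3int1 : IntervalIntegrable f''' volume a m := by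
    apply MeasureTheory.IntegrableOn.intervalIntegrable
    rw [uIcc_of_le ham.le]
    exact hint.mono_set (Icc_subset_Icc le_rfl hmb.le)
  have h3int2 : IntervalIntegrable f''' volume m b := by
    apply MeasureTheory.IntegrableOn.intervalIntegrable
    rw [uIcc_of_le hmb.le]
    exact hint.mono_set (Icc_subset_Icc ham.le le_rfl)
  have hK1int : IntervalIntegrable (fun s => (-(1/6) * (s-a)^2 * (s-m)) * f''' s) volume a m :=
    h3int1.continuousOn_mul (by fun_prop)
  have hK2int : IntervalIntegrable (fun s => (-(1/6) * (s-b)^2 * (s-m)) * f''' s) volume m b :=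
    h3int2.continuousOn_mul (by fun_prop)
  -- the two integration-by-parts identities
  have key1 := intervalIntegral.integral_eq_sub_of_hasDerivAt
    (f := fun t => (-(1/6) * (t-a)^2 * (t-m)) * f'' t
      - (-(1/6) * (2*(t-a)*(t-m) + (t-a)^2)) * f' t
      + (-(1/6) * (2*(t-m) + 4*(t-a))) * f t)
    (f' := fun s => (-(1/6) * (s-a)^2 * (s-m)) * f''' s - f s)
    (a := a) (b := m)
    (fun s hs => by
      rw [uIcc_of_le ham.le] at hs
      have hs' : s ∈ Icc a b := ⟨hs.1, hs.2.trans hmb.le⟩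
      exact cor12_vderiv a m f f' f'' f''' s (hf s hs') (hf' s hs') (hf'' s hs'))
    (hK1int.sub hfint1)
  rw [intervalIntegral.integral_sub hK1int hfint1] at key1
  beta_reduce at key1
  have key2 := intervalIntegral.integral_eq_sub_of_hasDerivAt
    (f := fun t => (-(1/6) * (t-b)^2 * (t-m)) * f'' t
      - (-(1/6) * (2*(t-b)*(t-m) + (t-b)^2)) * f' t
      + (-(1/6) * (2*(t-m) + 4*(t-b))) * f t)
    (f' := fun s => (-(1/6) * (s-b)^2 * (s-m)) * f''' s - f s)
    (a := m) (b := b)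
    (fun s hs => by
      rw [uIcc_of_le hmb.le] at hs
      have hs' : s ∈ Icc a b := ⟨ham.le.trans hs.1, hs.2⟩
      exact cor12_vderiv b m f f' f'' f''' s (hf s hs') (hf' s hs') (hf'' s hs'))
    (hK2int.sub hfint2)
  rw [intervalIntegral.integral_sub hK2int hfint2] at key2
  beta_reduce at key2
  have hsplit : (∫ s in a..m, f s) + ∫ s in m..b, f s = ∫ s in a..b, f s :=
    intervalIntegral.integral_add_adjacent_intervals hfint1 hfint2
  have hE : (∫ x in a..b, f x) - ((b - a) / 6) * (f a + 4 * f m + f b)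
      = (∫ s in a..m, (-(1/6) * (s-a)^2 * (s-m)) * f''' s)
        + ∫ s in m..b, (-(1/6) * (s-b)^2 * (s-m)) * f''' s := by
    rw [hm] at key1 key2 hsplit ⊢
    linear_combination -key1 - key2 - hsplit
  -- pointwise bound from the Q-property
  have hbound : ∀ s, a < s → s < b →
      |f''' s| ≤ |f''' a| * ((b-a)/(b-s)) + |f''' b| * ((b-a)/(s-a)) := by
    intro s h1 h2
    have hbs : (0:ℝ) < b - s := by linarith
    have hsa : (0:ℝ) < s - a := by linarith
    have h := hQ a (Set.left_mem_Icc.2 hab.le) b (Set.right_mem_Icc.2 hab.le)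
      ((b-s)/(b-a)) ⟨div_pos hbs hba, (div_lt_one hba).2 (by linarith)⟩
    have harg : (b-s)/(b-a) * a + (1 - (b-s)/(b-a)) * b = s := by
      field_simp
      ring
    rw [harg] at h
    have e2 : (1 : ℝ) - (b-s)/(b-a) = (s-a)/(b-a) := by
      field_simp
      ring
    have e1 : |f''' a| / ((b-s)/(b-a)) = |f''' a| * ((b-a)/(b-s)) := by
      rw [div_div_eq_mul_div, mul_div_assoc]
    have e3 : |f''' b| / ((s-a)/(b-a)) = |f''' b| * ((b-a)/(s-a)) := by
      rw [div_div_eq_mul_div, mul_div_assoc]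
    rw [e2, e1, e3] at h
    exact h
  -- majorant on the left half
  have hg1c : ContinuousOn (fun s => (1/6)*(s-a)^2*(m-s)*(|f''' a| * ((b-a)/(b-s)))
      + (1/6)*(s-a)*(m-s)*(b-a)*|f''' b|) (Icc a m) := by
    apply ContinuousOn.add
    · apply ContinuousOn.mul (by fun_prop)
      apply ContinuousOn.mul continuousOn_const
      apply ContinuousOn.div continuousOn_const (by fun_prop)
      intro x hx
      exact sub_ne_zero.2 (ne_of_gt (lt_of_le_of_lt hx.2 hmb))
    · fun_prop
  have hb1 : IntervalIntegrable (fun s => (1/6)*(s-a)^2*(m-s)*(|f''' a| * ((b-a)/(b-s)))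
      + (1/6)*(s-a)*(m-s)*(b-a)*|f''' b|) volume a m := by
    apply ContinuousOn.intervalIntegrable
    rw [uIcc_of_le ham.le]
    exact hg1c
  have hmono1 : (∫ s in a..m, |(-(1/6) * (s-a)^2 * (s-m)) * f''' s|)
      ≤ ∫ s in a..m, ((1/6)*(s-a)^2*(m-s)*(|f''' a| * ((b-a)/(b-s)))
          + (1/6)*(s-a)*(m-s)*(b-a)*|f''' b|) := by
    apply intervalIntegral.integral_mono_ae_restrict ham.le hK1int.abs hb1
    have hane : ∀ᵐ (x : ℝ) ∂(volume.restrict (Icc a m)), x ≠ a := by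
      refine ae_restrict_of_ae ?_
      have h0 : (volume : Measure ℝ) {a} = 0 := Real.volume_singleton
      filter_upwards [measure_eq_zero_iff_ae_notMem.1 h0] with x hx
      simpa using hx
    filter_upwards [ae_restrict_mem measurableSet_Icc, hane] with s hs hsa
    have hsa' : a < s := lt_of_le_of_ne hs.1 (Ne.symm hsa)
    have hsb : s < b := lt_of_le_of_lt hs.2 hmb
    have hnn : (0:ℝ) ≤ -(1/6) * (s-a)^2 * (s-m) := by
      nlinarith [mul_nonneg (sq_nonneg (s-a)) (sub_nonneg.2 hs.2)]
    have hne1 : b - s ≠ 0 := ne_of_gt (by linarith)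
    have hne2 : s - a ≠ 0 := ne_of_gt (by linarith)
    calc |(-(1/6) * (s-a)^2 * (s-m)) * f''' s|
        = (-(1/6) * (s-a)^2 * (s-m)) * |f''' s| := by
          rw [abs_mul, abs_of_nonneg hnn]
      _ ≤ (-(1/6) * (s-a)^2 * (s-m))
            * (|f''' a| * ((b-a)/(b-s)) + |f''' b| * ((b-a)/(s-a))) :=
          mul_le_mul_of_nonneg_left (hbound s hsa' hsb) hnn
      _ = (1/6)*(s-a)^2*(m-s)*(|f''' a| * ((b-a)/(b-s)))
            + (1/6)*(s-a)*(m-s)*(b-a)*|f''' b| := by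
          field_simp
          ring
  -- majorant on the right half
  have hg2c : ContinuousOn (fun s => (1/6)*(b-s)*(s-m)*(b-a)*|f''' a|
      + (1/6)*(b-s)^2*(s-m)*(|f''' b| * ((b-a)/(s-a)))) (Icc m b) := by
    apply ContinuousOn.add
    · fun_prop
    · apply ContinuousOn.mul (by fun_prop)
      apply ContinuousOn.mul continuousOn_const
      apply ContinuousOn.div continuousOn_const (by fun_prop)
      intro x hx
      exact sub_ne_zero.2 (ne_of_gt (lt_of_lt_of_le ham hx.1))
  have hb2 : IntervalIntegrable (fun s => (1/6)*(b-s)*(s-m)*(b-a)*|f''' a|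
      + (1/6)*(b-s)^2*(s-m)*(|f''' b| * ((b-a)/(s-a)))) volume m b := by
    apply ContinuousOn.intervalIntegrable
    rw [uIcc_of_le hmb.le]
    exact hg2c
  have hmono2 : (∫ s in m..b, |(-(1/6) * (s-b)^2 * (s-m)) * f''' s|)
      ≤ ∫ s in m..b, ((1/6)*(b-s)*(s-m)*(b-a)*|f''' a|
          + (1/6)*(b-s)^2*(s-m)*(|f''' b| * ((b-a)/(s-a)))) := by
    apply intervalIntegral.integral_mono_ae_restrict hmb.le hK2int.abs hb2
    have hbne : ∀ᵐ (x : ℝ) ∂(volume.restrict (Icc m b)), x ≠ b := by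
      refine ae_restrict_of_ae ?_
      have h0 : (volume : Measure ℝ) {b} = 0 := Real.volume_singleton
      filter_upwards [measure_eq_zero_iff_ae_notMem.1 h0] with x hx
      simpa using hx
    filter_upwards [ae_restrict_mem measurableSet_Icc, hbne] with s hs hsb
    have hsb' : s < b := lt_of_le_of_ne hs.2 hsb
    have hsa' : a < s := lt_of_lt_of_le ham hs.1
    have hnp : -(1/6) * (s-b)^2 * (s-m) ≤ 0 := by
      nlinarith [mul_nonneg (sq_nonneg (s-b)) (sub_nonneg.2 hs.1)]
    have hne1 : b - s ≠ 0 := ne_of_gt (by linarith)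
    have hne2 : s - a ≠ 0 := ne_of_gt (by linarith)
    calc |(-(1/6) * (s-b)^2 * (s-m)) * f''' s|
        = ((1/6) * (s-b)^2 * (s-m)) * |f''' s| := by
          rw [abs_mul, abs_of_nonpos hnp]
          ring
      _ ≤ ((1/6) * (s-b)^2 * (s-m))
            * (|f''' a| * ((b-a)/(b-s)) + |f''' b| * ((b-a)/(s-a))) := by
          apply mul_le_mul_of_nonneg_left (hbound s hsa' hsb')
          nlinarith [mul_nonneg (sq_nonneg (s-b)) (sub_nonneg.2 hs.1)]
      _ = (1/6)*(b-s)*(s-m)*(b-a)*|f''' a|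
            + (1/6)*(b-s)^2*(s-m)*(|f''' b| * ((b-a)/(s-a))) := by
          field_simp
          ring
  -- exact values of the majorant integrals
  have hlog2 : Real.log (b - a) = Real.log 2 + Real.log ((b - a)/2) := by
    rw [← Real.log_mul two_ne_zero (ne_of_gt (by linarith : (0:ℝ) < (b - a)/2))]
    congr 1
    ring
  have hval1 : (∫ s in a..m, ((1/6)*(s-a)^2*(m-s)*(|f''' a| * ((b-a)/(b-s)))
          + (1/6)*(s-a)*(m-s)*(b-a)*|f''' b|))
      = |f''' a| * ((17/288)*(b-a)^4 - ((b-a)^4/12) * Real.log 2)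
        + |f''' b| * ((b-a)^4/288) := by
    have hFTC := intervalIntegral.integral_eq_sub_of_hasDerivAt
      (f := fun t => (|f''' a| * (b-a)/6) * ((-(1:ℝ)/3) * (b-t)^3 + (5*(b-a)/4) * (b-t)^2
          + (-(2*(b-a)^2)) * (b-t) + ((b-a)^3/2) * Real.log (b-t))
        + (|f''' b| * (b-a)/6) * ((-(1:ℝ)/3) * t^3 + ((a+m)/2) * t^2 + (-(a*m)) * t))
      (f' := fun s => (1/6)*(s-a)^2*(m-s)*(|f''' a| * ((b-a)/(b-s)))
          + (1/6)*(s-a)*(m-s)*(b-a)*|f''' b|)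
      (a := a) (b := m)
      (fun s hs => by
        rw [uIcc_of_le ham.le] at hs
        have hbs : (0:ℝ) < b - s := by
          have := hs.2
          simp only [hm] at this ⊢
          linarith
        have hbt : HasDerivAt (fun t : ℝ => b - t) (-1) s := (hasDerivAt_id s).const_sub b
        have d1 := (hbt.pow 3).const_mul (-(1:ℝ)/3)
        have d2 := (hbt.pow 2).const_mul (5*(b-a)/4)
        have d3 := hbt.const_mul (-(2*(b-a)^2))
        have d4 := (hbt.log (ne_of_gt hbs)).const_mul ((b-a)^3/2)
        have dA := (((d1.add d2).add d3).add d4).const_mul (|f''' a| * (b-a)/6)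
        have e1' := (hasDerivAt_pow 3 s).const_mul (-(1:ℝ)/3)
        have e2' := (hasDerivAt_pow 2 s).const_mul ((a+m)/2)
        have e3' := (hasDerivAt_id s).const_mul (-(a*m))
        have dB := ((e1'.add e2').add e3').const_mul (|f''' b| * (b-a)/6)
        have H : HasDerivAt (fun t => (|f''' a| * (b-a)/6) * ((-(1:ℝ)/3) * (b-t)^3 + (5*(b-a)/4) * (b-t)^2
              + (-(2*(b-a)^2)) * (b-t) + ((b-a)^3/2) * Real.log (b-t))
            + (|f''' b| * (b-a)/6) * ((-(1:ℝ)/3) * t^3 + ((a+m)/2) * t^2 + (-(a*m)) * t)) _ s := dA.add dB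
        refine H.congr_deriv ?_
        have hne : b - s ≠ 0 := ne_of_gt hbs
        field_simp
        ring)
      hb1
    rw [hFTC]
    beta_reduce
    rw [hm, show b - (a + b) / 2 = (b - a) / 2 from by ring, hlog2]
    ring
  have hval2 : (∫ s in m..b, ((1/6)*(b-s)*(s-m)*(b-a)*|f''' a|
          + (1/6)*(b-s)^2*(s-m)*(|f''' b| * ((b-a)/(s-a)))))
      = |f''' a| * ((b-a)^4/288)
        + |f''' b| * ((17/288)*(b-a)^4 - ((b-a)^4/12) * Real.log 2) := by
    have hFTC := intervalIntegral.integral_eq_sub_of_hasDerivAt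
      (f := fun t => (|f''' a| * (b-a)/6) * ((-(1:ℝ)/3) * t^3 + ((b+m)/2) * t^2 + (-(b*m)) * t)
        + (|f''' b| * (b-a)/6) * (((1:ℝ)/3) * (t-a)^3 + (-(5*(b-a)/4)) * (t-a)^2
          + (2*(b-a)^2) * (t-a) + (-((b-a)^3/2)) * Real.log (t-a)))
      (f' := fun s => (1/6)*(b-s)*(s-m)*(b-a)*|f''' a|
          + (1/6)*(b-s)^2*(s-m)*(|f''' b| * ((b-a)/(s-a))))
      (a := m) (b := b)
      (fun s hs => by
        rw [uIcc_of_le hmb.le] at hs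
        have hsa : (0:ℝ) < s - a := by
          have := hs.1
          simp only [hm] at this ⊢
          linarith
        have hta : HasDerivAt (fun t : ℝ => t - a) 1 s := (hasDerivAt_id s).sub_const a
        have e1' := (hasDerivAt_pow 3 s).const_mul (-(1:ℝ)/3)
        have e2' := (hasDerivAt_pow 2 s).const_mul ((b+m)/2)
        have e3' := (hasDerivAt_id s).const_mul (-(b*m))
        have dA := ((e1'.add e2').add e3').const_mul (|f''' a| * (b-a)/6)
        have d1 := (hta.pow 3).const_mul ((1:ℝ)/3)
        have d2 := (hta.pow 2).const_mul (-(5*(b-a)/4))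
        have d3 := hta.const_mul (2*(b-a)^2)
        have d4 := (hta.log (ne_of_gt hsa)).const_mul (-((b-a)^3/2))
        have dB := (((d1.add d2).add d3).add d4).const_mul (|f''' b| * (b-a)/6)
        have H : HasDerivAt (fun t => (|f''' a| * (b-a)/6) * ((-(1:ℝ)/3) * t^3 + ((b+m)/2) * t^2 + (-(b*m)) * t)
            + (|f''' b| * (b-a)/6) * (((1:ℝ)/3) * (t-a)^3 + (-(5*(b-a)/4)) * (t-a)^2
              + (2*(b-a)^2) * (t-a) + (-((b-a)^3/2)) * Real.log (t-a))) _ s := dA.add dB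
        refine H.congr_deriv ?_
        have hne : s - a ≠ 0 := ne_of_gt hsa
        field_simp
        ring)
      hb2
    rw [hFTC]
    beta_reduce
    rw [hm, show (a + b) / 2 - a = (b - a) / 2 from by ring, hlog2]
    ring
  -- final assembly
  calc |(∫ x in a..b, f x) - ((b - a) / 6) * (f a + 4 * f m + f b)|
      = |(∫ s in a..m, (-(1/6) * (s-a)^2 * (s-m)) * f''' s)
          + ∫ s in m..b, (-(1/6) * (s-b)^2 * (s-m)) * f''' s| := by rw [hE]
    _ ≤ |∫ s in a..m, (-(1/6) * (s-a)^2 * (s-m)) * f''' s|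
          + |∫ s in m..b, (-(1/6) * (s-b)^2 * (s-m)) * f''' s| := abs_add_le _ _
    _ ≤ (∫ s in a..m, |(-(1/6) * (s-a)^2 * (s-m)) * f''' s|)
          + ∫ s in m..b, |(-(1/6) * (s-b)^2 * (s-m)) * f''' s| :=
        add_le_add (intervalIntegral.abs_integral_le_integral_abs ham.le)
          (intervalIntegral.abs_integral_le_integral_abs hmb.le)
    _ ≤ (∫ s in a..m, ((1/6)*(s-a)^2*(m-s)*(|f''' a| * ((b-a)/(b-s)))
            + (1/6)*(s-a)*(m-s)*(b-a)*|f''' b|))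
          + ∫ s in m..b, ((1/6)*(b-s)*(s-m)*(b-a)*|f''' a|
            + (1/6)*(b-s)^2*(s-m)*(|f''' b| * ((b-a)/(s-a)))) :=
        add_le_add hmono1 hmono2
    _ = ((b - a) ^ 4 / 6) * (3 / 8 - (1 / 2) * Real.log 2) * (|f''' a| + |f''' b|) := by
        rw [hval1, hval2]
        ring
end

section
/- If g belongs to the Godunova-Levin class Q(I) on an interval I, then for all t ∈ (0,1) and x, y ∈ I, g(tx + (1-t)y) ≤ g(x)/t + g(y)/(1-t); consequently ∫_0^1 t(1-t)|2t-1| g(ta + (1-t)b) dt ≤ (1/4)(g(a) + g(b)) for a, b ∈ I, provided the integral on the left exists. -/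
open MeasureTheory

-- antiderivative lemma
lemma hderiv (c d t : ℝ) :
    HasDerivAt (fun t : ℝ => c*(t - 3/2*t^2 + 2/3*t^3) + d*(t^2/2 - 2/3*t^3))
      ((1 - 2*t) * ((1-t)*c + t*d)) t := by
  have h1 : HasDerivAt (fun t : ℝ => t) 1 t := hasDerivAt_id t
  have h2 : HasDerivAt (fun t : ℝ => t^2) (2*t) t := by simpa using hasDerivAt_pow 2 t
  have h3 : HasDerivAt (fun t : ℝ => t^3) (3*t^2) t := by simpa using hasDerivAt_pow 3 t
  have := (((h1.sub (h2.const_mul (3/2:ℝ))).add (h3.const_mul (2/3:ℝ))).const_mul c).add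
    (((h2.const_mul (1/2:ℝ)).sub (h3.const_mul (2/3:ℝ))).const_mul d)
  refine (this.congr_deriv (by ring)).congr_of_eventuallyEq
    (Filter.Eventually.of_forall fun x => by simp only [Pi.add_apply, Pi.sub_apply]; ring)

lemma int_piece (c d : ℝ) :
    (∫ t in (0:ℝ)..1, |2*t - 1| * ((1-t)*c + t*d)) = (c + d)/4 := by
  have cont : Continuous (fun t : ℝ => |2*t - 1| * ((1-t)*c + t*d)) := by
    apply Continuous.mul
    · exact (continuous_const.mul continuous_id |>.sub continuous_const).abs
    · fun_prop
  have h1 : (∫ t in (0:ℝ)..(1/2), |2*t - 1| * ((1-t)*c + t*d)) = 5/24*c + 1/24*d := by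
    have e : ∀ t ∈ Set.uIcc (0:ℝ) (1/2), |2*t - 1| * ((1-t)*c + t*d)
        = (1 - 2*t) * ((1-t)*c + t*d) := by
      intro t ht
      rw [Set.uIcc_of_le (by norm_num)] at ht
      rw [abs_of_nonpos (by nlinarith [ht.1, ht.2])]
      ring
    rw [intervalIntegral.integral_congr e,
      intervalIntegral.integral_eq_sub_of_hasDerivAt (fun t _ => hderiv c d t)
        (Continuous.intervalIntegrable (by fun_prop) _ _)]
    norm_num; ring
  have h2 : (∫ t in (1/2:ℝ)..1, |2*t - 1| * ((1-t)*c + t*d)) = 1/24*c + 5/24*d := by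
    have e : ∀ t ∈ Set.uIcc (1/2:ℝ) 1, |2*t - 1| * ((1-t)*c + t*d)
        = -((1 - 2*t) * ((1-t)*c + t*d)) := by
      intro t ht
      rw [Set.uIcc_of_le (by norm_num)] at ht
      rw [abs_of_nonneg (by nlinarith [ht.1, ht.2])]
      ring
    rw [intervalIntegral.integral_congr e, intervalIntegral.integral_neg,
      intervalIntegral.integral_eq_sub_of_hasDerivAt (fun t _ => hderiv c d t)
        (Continuous.intervalIntegrable (by fun_prop) _ _)]
    norm_num; ring
  have := intervalIntegral.integral_add_adjacent_intervals
    (cont.intervalIntegrable (μ := volume) (0:ℝ) (1/2)) (cont.intervalIntegrable (μ := volume) (1/2:ℝ) 1)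
  rw [← this, h1, h2]; ring

theorem GL_bound (I : Set ℝ) (hI : I.OrdConnected) (g : ℝ → ℝ)
    (hg0 : ∀ x ∈ I, 0 ≤ g x)
    (hQ : ∀ x ∈ I, ∀ y ∈ I, ∀ l ∈ Set.Ioo (0:ℝ) 1,
      g (l * x + (1 - l) * y) ≤ g x / l + g y / (1 - l)) :
    (∀ t ∈ Set.Ioo (0:ℝ) 1, ∀ x ∈ I, ∀ y ∈ I,
      g (t * x + (1 - t) * y) ≤ g x / t + g y / (1 - t)) ∧
    ∀ a ∈ I, ∀ b ∈ I,
      IntervalIntegrable (fun t => t * (1 - t) * |2 * t - 1| * g (t * a + (1 - t) * b))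
        volume 0 1 →
      (∫ t in (0:ℝ)..1, t * (1 - t) * |2 * t - 1| * g (t * a + (1 - t) * b))
        ≤ (1 / 4) * (g a + g b) := by
  constructor
  · intro t ht x hx y hy
    exact hQ x hx y hy t ht
  · intro a ha b hb hint
    set h : ℝ → ℝ := fun t => |2*t - 1| * ((1-t) * g a + t * g b) with hh
    have conth : Continuous h := by
      apply Continuous.mul
      · exact (continuous_const.mul continuous_id |>.sub continuous_const).abs
      · fun_prop
    have hle : ∀ t ∈ Set.Icc (0:ℝ) 1,
        t * (1 - t) * |2 * t - 1| * g (t * a + (1 - t) * b) ≤ h t := by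
      intro t ht
      rcases eq_or_lt_of_le ht.1 with h0 | h0
      · simp [hh, ← h0]
        nlinarith [hg0 a ha, hg0 b hb]
      rcases eq_or_lt_of_le ht.2 with h1 | h1
      · subst h1
        simp only [hh]
        norm_num
        nlinarith [hg0 b hb, abs_nonneg (2*(1:ℝ)-1)]
      have hgle := hQ a ha b hb t ⟨h0, h1⟩
      have hfac : 0 ≤ t * (1 - t) * |2 * t - 1| :=
        mul_nonneg (mul_nonneg h0.le (by linarith)) (abs_nonneg _)
      calc t * (1 - t) * |2 * t - 1| * g (t * a + (1 - t) * b)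
          ≤ t * (1 - t) * |2 * t - 1| * (g a / t + g b / (1 - t)) :=
            mul_le_mul_of_nonneg_left hgle hfac
        _ = h t := by
            have hne : (1:ℝ) - t ≠ 0 := by linarith
            have hne0 : t ≠ 0 := ne_of_gt h0
            rw [hh]
            field_simp
    have := intervalIntegral.integral_mono_on (by norm_num : (0:ℝ) ≤ 1) hint
      (conth.intervalIntegrable (μ := volume) 0 1) hle
    calc (∫ t in (0:ℝ)..1, t * (1 - t) * |2 * t - 1| * g (t * a + (1 - t) * b))
        ≤ ∫ t in (0:ℝ)..1, h t := this
      _ = (g a + g b)/4 := int_piece (g a) (g b)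
      _ = (1/4) * (g a + g b) := by ring
end
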